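/- Let A be a finite poset with A⁺ its extension by a greatest element, H a Hilbert space, (H_a)_{a∈A} a monotone family of closed subspaces of H with H_1 := H, and π_a the orthogonal projection onto H_a. Suppose there exist continuous linear operators (s_a)_{a∈A⁺} on H such that s_a ∘ s_b = 0 for a ≠ b, s_a ∘ s_a = s_a, Σ_{a∈A⁺} s_a = id_H, and π_a = Σ_{b∈A⁺, b≤a} s_b for every a ∈ A⁺. Then each s_a equals the orthogonal projection s_a^⊥ onto S_a := H_a ∩ ⋂_{b∈A⁺, b<a} H_b^⊥, and the family (H_a)_{a∈A} is decomposable. -/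

import Mathlib

open Submodule

variable {𝕜 E : Type*} [RCLike 𝕜] [NormedAddCommGroup E] [InnerProductSpace 𝕜 E]
  [CompleteSpace E]

/-- The orthogonal projection of `E` onto the topological closure of `K`,
as a continuous linear map `E →L[𝕜] E`. -/
noncomputable def projC (K : Submodule 𝕜 E) : E →L[𝕜] E :=
  haveI : CompleteSpace K.topologicalClosure :=
    K.isClosed_topologicalClosure.completeSpace_coe
  K.topologicalClosure.subtypeL.comp (orthogonalProjection K.topologicalClosure)

/-- The extension of the family `(H_a)_{a ∈ A}` to `A⁺ = WithTop A`, sending the added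
greatest element `⊤` to the whole space (`H_1 := H`). -/
def extFam {A : Type*} [PartialOrder A] (H : A → Submodule 𝕜 E) :
    WithTop A → Submodule 𝕜 E :=
  fun x => WithTop.recTopCoe ⊤ H x

/-- `S_a := H_a ∩ ⋂_{b ∈ A⁺, b < a} H_b^⊥` for `a ∈ A⁺`. -/
def interactionSub {A : Type*} [PartialOrder A] (H : A → Submodule 𝕜 E)
    (a : WithTop A) : Submodule 𝕜 E :=
  extFam H a ⊓ ⨅ b ∈ {b : WithTop A | b < a}, (extFam H b)ᗮ

/-- A monotone family `(H_a)_{a ∈ A}` of closed subspaces of `E` is decomposable if there is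
a family `(S'_a)_{a ∈ A⁺}` of pairwise orthogonal closed subspaces whose total closed span is
`E` and whose partial closed spans over `{b ≤ a}` recover each `H_a`. -/
def Decomposable {A : Type*} [PartialOrder A] (H : A → Submodule 𝕜 E) : Prop :=
  ∃ S : WithTop A → Submodule 𝕜 E,
    (∀ a, IsClosed ((S a : Submodule 𝕜 E) : Set E)) ∧
    (∀ a b, a ≠ b → ∀ u ∈ S a, ∀ v ∈ S b, (inner 𝕜 u v : 𝕜) = 0) ∧
    (⨆ a, S a).topologicalClosure = ⊤ ∧
    (∀ a : A, (⨆ b ∈ {b : A | b ≤ a}, S (b : WithTop A)).topologicalClosure = H a)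

instance {A : Type*} [Fintype A] : Fintype (WithTop A) :=
  inferInstanceAs (Fintype (Option A))

lemma projC_isSelfAdjoint (K : Submodule 𝕜 E) : IsSelfAdjoint (projC K) := by
  haveI : CompleteSpace K.topologicalClosure :=
    K.isClosed_topologicalClosure.completeSpace_coe
  exact isSelfAdjoint_starProjection K.topologicalClosure

lemma projC_eq_of {K : Submodule 𝕜 E} (hK : IsClosed (K : Set E)) {x y : E}
    (hy : y ∈ K) (hxy : x - y ∈ Kᗮ) : projC K x = y := by
  haveI : CompleteSpace K.topologicalClosure :=
    K.isClosed_topologicalClosure.completeSpace_coe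
  have h1 : K.topologicalClosure = K := hK.submodule_topologicalClosure_eq
  exact eq_starProjection_of_mem_orthogonal (by rw [h1]; exact hy) (by rw [h1]; exact hxy)

lemma projC_mem {K : Submodule 𝕜 E} (hK : IsClosed (K : Set E)) (x : E) : projC K x ∈ K := by
  haveI : CompleteSpace K.topologicalClosure :=
    K.isClosed_topologicalClosure.completeSpace_coe
  have h1 : K.topologicalClosure = K := hK.submodule_topologicalClosure_eq
  have h2 : (↑((orthogonalProjection K.topologicalClosure) x) : E) ∈ K.topologicalClosure :=
    ((orthogonalProjection K.topologicalClosure) x).2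
  exact (SetLike.ext_iff.mp h1 _).mp h2

lemma sub_projC_mem {K : Submodule 𝕜 E} (hK : IsClosed (K : Set E)) (x : E) :
    x - projC K x ∈ Kᗮ := by
  haveI : CompleteSpace K.topologicalClosure :=
    K.isClosed_topologicalClosure.completeSpace_coe
  have h1 : K.topologicalClosure = K := hK.submodule_topologicalClosure_eq
  have := sub_starProjection_mem_orthogonal (K := K.topologicalClosure) x
  have h3 : K.topologicalClosureᗮ = Kᗮ := by rw [h1]
  rw [← h3]
  exact this

lemma projC_eq_self' {K : Submodule 𝕜 E} (hK : IsClosed (K : Set E)) {x : E}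
    (hx : x ∈ K) : projC K x = x :=
  projC_eq_of hK hx (by simp)

lemma projC_eq_zero {K : Submodule 𝕜 E} (hK : IsClosed (K : Set E)) {x : E}
    (hx : x ∈ Kᗮ) : projC K x = 0 :=
  projC_eq_of hK (zero_mem K) (by simpa)

lemma extFam_top {A : Type*} [PartialOrder A] (H : A → Submodule 𝕜 E) :
    extFam H (⊤ : WithTop A) = ⊤ := rfl

lemma extFam_coe {A : Type*} [PartialOrder A] (H : A → Submodule 𝕜 E) (a : A) :
    extFam H (a : WithTop A) = H a := rfl

lemma mem_interactionSub {A : Type*} [PartialOrder A] {H : A → Submodule 𝕜 E}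
    {a : WithTop A} {x : E} :
    x ∈ interactionSub H a ↔ x ∈ extFam H a ∧ ∀ b : WithTop A, b < a → x ∈ (extFam H b)ᗮ := by
  simp [interactionSub, Submodule.mem_inf, Submodule.mem_iInf, Set.mem_setOf_eq]


/-- Over a finite poset `A`, if the orthogonal projections `π_a` onto the
`H_a` (with `H_1 := H` for the adjoined top element) admit a decomposition by a family of
operators `(s_a)_{a ∈ A⁺}` with `s_a ∘ s_b = 0` for `a ≠ b`, `s_a` idempotent,
`Σ_a s_a = id` and `π_a = Σ_{b ≤ a} s_b`, then each `s_a` is the orthogonal projection onto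
`S_a = H_a ∩ ⋂_{b < a} H_b^⊥` and the family `(H_a)_{a ∈ A}` is decomposable. -/
theorem decomposable_of_projector_decomposition
    {A : Type*} [PartialOrder A] [Fintype A] [DecidableEq A]
    [DecidableRel ((· ≤ ·) : A → A → Prop)]
    (H : A → Submodule 𝕜 E)
    (hclosed : ∀ a, IsClosed ((H a : Submodule 𝕜 E) : Set E))
    (hmono : Monotone H)
    (s : WithTop A → (E →L[𝕜] E))
    (hzero : ∀ a b : WithTop A, a ≠ b → (s a).comp (s b) = 0)
    (hidem : ∀ a : WithTop A, (s a).comp (s a) = s a)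
    (hsum : ∑ a : WithTop A, s a = ContinuousLinearMap.id 𝕜 E)
    (hproj : ∀ a : WithTop A,
      projC (extFam H a) = ∑ b ∈ Finset.univ.filter (fun b => b ≤ a), s b) :
    (∀ a : WithTop A, s a = projC (interactionSub H a)) ∧ Decomposable H := by
  classical
  have hclosed' : ∀ a : WithTop A, IsClosed ((extFam H a : Submodule 𝕜 E) : Set E) := by
    intro a
    induction a using WithTop.recTopCoe with
    | top => rw [extFam_top]; simpa using isClosed_univ
    | coe a => exact hclosed a
  -- basic annihilation facts
  have happly0 : ∀ a b : WithTop A, a ≠ b → ∀ x, s a (s b x) = 0 := by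
    intro a b hab x
    have := congrFun (congrArg DFunLike.coe (hzero a b hab)) x
    simpa using this
  have happly1 : ∀ a : WithTop A, ∀ x, s a (s a x) = s a x := by
    intro a x
    have := congrFun (congrArg DFunLike.coe (hidem a)) x
    simpa using this
  -- key operator identities, pointwise
  have key1 : ∀ (a : WithTop A) (x : E), projC (extFam H a) (s a x) = s a x := by
    intro a x
    rw [hproj a, ContinuousLinearMap.sum_apply]
    rw [Finset.sum_eq_single a (fun b _ hb => happly0 b a hb _) (by simp)]
    exact happly1 a x
  have key2 : ∀ (a b : WithTop A) (x : E), b < a → projC (extFam H b) (s a x) = 0 := by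
    intro a b x hba
    rw [hproj b, ContinuousLinearMap.sum_apply]
    refine Finset.sum_eq_zero fun c hc => ?_
    have hc' : c ≤ b := by simpa using hc
    exact happly0 c a (fun h => absurd (h ▸ hc') (not_le_of_gt hba)) x
  have key3 : ∀ (a b : WithTop A) (x : E), ¬ b ≤ a → s b (projC (extFam H a) x) = 0 := by
    intro a b x hba
    rw [hproj a, ContinuousLinearMap.sum_apply, map_sum]
    refine Finset.sum_eq_zero fun c hc => ?_
    have hc' : c ≤ a := by simpa using hc
    exact happly0 b c (fun h => hba (h ▸ hc')) x
  have key4 : ∀ (b : WithTop A) (x : E), s b (projC (extFam H b) x) = s b x := by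
    intro b x
    rw [hproj b, ContinuousLinearMap.sum_apply, map_sum]
    rw [Finset.sum_eq_single b (fun c _ hc => happly0 b c (Ne.symm hc) _) (by simp)]
    exact happly1 b x
  -- range of s a lies in S_a
  have hrangeMem : ∀ (a : WithTop A) (x : E), s a x ∈ interactionSub H a := by
    intro a x
    rw [mem_interactionSub]
    constructor
    · rw [← key1 a x]; exact projC_mem (hclosed' a) _
    · intro b hba
      have := sub_projC_mem (hclosed' b) (s a x)
      rwa [key2 a b x hba, sub_zero] at this
  -- s a fixes S_a
  have hfix : ∀ (a : WithTop A) (x : E), x ∈ interactionSub H a → s a x = x := by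
    intro a x hx
    rw [mem_interactionSub] at hx
    obtain ⟨hx1, hx2⟩ := hx
    have hb0 : ∀ b : WithTop A, b ≠ a → s b x = 0 := by
      intro b hb
      by_cases hba : b ≤ a
      · have hlt : b < a := lt_of_le_of_ne hba hb
        have h0 : projC (extFam H b) x = 0 := projC_eq_zero (hclosed' b) (hx2 b hlt)
        rw [← key4 b x, h0, map_zero]
      · have hpa : projC (extFam H a) x = x := projC_eq_self' (hclosed' a) hx1
        rw [← hpa]
        exact key3 a b x hba
    have hxsum : ∑ b : WithTop A, s b x = x := by
      have := congrFun (congrArg DFunLike.coe hsum) x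
      simpa [ContinuousLinearMap.sum_apply] using this
    calc s a x = ∑ b : WithTop A, s b x := by
          rw [Finset.sum_eq_single a (fun b _ hb => hb0 b hb) (by simp)]
      _ = x := hxsum
  -- self-adjointness by well-founded induction
  have hSA : ∀ a : WithTop A, IsSelfAdjoint (s a) := by
    intro a
    induction a using WellFoundedLT.induction with
    | ind a ih =>
      have hsplit : s a = projC (extFam H a)
          - ∑ b ∈ Finset.univ.filter (fun b => b < a), s b := by
        rw [hproj a]
        have hset : Finset.univ.filter (fun b => b ≤ a)
            = insert a (Finset.univ.filter (fun b => b < a)) := by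
          ext b
          simp [Finset.mem_insert, le_iff_lt_or_eq, or_comm]
        rw [hset, Finset.sum_insert (by simp)]
        abel
      rw [hsplit]
      refine (projC_isSelfAdjoint _).sub ?_
      have : star (∑ b ∈ Finset.univ.filter (fun b => b < a), s b)
          = ∑ b ∈ Finset.univ.filter (fun b => b < a), s b := by
        rw [star_sum]
        refine Finset.sum_congr rfl fun b hb => ?_
        exact ih b (by simpa using hb)
      exact this
  have hsymm : ∀ a : WithTop A, ∀ x y : E, (inner 𝕜 (s a x) y : 𝕜) = inner 𝕜 x (s a y) :=
    fun a => ContinuousLinearMap.isSelfAdjoint_iff_isSymmetric.mp (hSA a)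
  -- closedness of S_a
  have hSclosed : ∀ a : WithTop A, IsClosed ((interactionSub H a : Submodule 𝕜 E) : Set E) := by
    intro a
    have hset : ((interactionSub H a : Submodule 𝕜 E) : Set E)
        = (extFam H a : Set E) ∩ ⋂ b ∈ {b : WithTop A | b < a}, ((extFam H b)ᗮ : Set E) := by
      ext x
      simp [mem_interactionSub, Set.mem_iInter, Set.mem_setOf_eq]
    rw [hset]
    exact (hclosed' a).inter
      (isClosed_biInter fun b _ => Submodule.isClosed_orthogonal _)
  -- s a equals the orthogonal projection onto S_a
  have hs_eq : ∀ a : WithTop A, s a = projC (interactionSub H a) := by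
    intro a
    ext x
    symm
    refine projC_eq_of (hSclosed a) (hrangeMem a x) ?_
    rw [Submodule.mem_orthogonal]
    intro u hu
    have hs0 : s a (x - s a x) = 0 := by
      rw [map_sub, happly1 a x, sub_self]
    calc (inner 𝕜 u (x - s a x) : 𝕜) = inner 𝕜 (s a u) (x - s a x) := by rw [hfix a u hu]
      _ = inner 𝕜 u (s a (x - s a x)) := hsymm a u (x - s a x)
      _ = 0 := by rw [hs0, inner_zero_right]
  refine ⟨hs_eq, fun a => interactionSub H a, hSclosed, ?_, ?_, ?_⟩
  · -- pairwise orthogonality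
    intro a b hab u hu v hv
    have hsv : s a (s b v) = 0 := happly0 a b hab v
    calc (inner 𝕜 u v : 𝕜) = inner 𝕜 (s a u) (s b v) := by rw [hfix a u hu, hfix b v hv]
      _ = inner 𝕜 u (s a (s b v)) := hsymm a u (s b v)
      _ = 0 := by rw [hsv, inner_zero_right]
  · -- total closed span is everything
    refine top_unique ?_
    refine le_trans ?_ (Submodule.le_topologicalClosure _)
    intro x _
    have hxsum : ∑ b : WithTop A, s b x = x := by
      have := congrFun (congrArg DFunLike.coe hsum) x
      simpa [ContinuousLinearMap.sum_apply] using this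
    rw [← hxsum]
    exact Submodule.sum_mem _ fun b _ =>
      (le_iSup (fun c => interactionSub H c) b) (hrangeMem b x)
  · -- partial closed spans recover H a
    intro a
    refine le_antisymm ?_ ?_
    · refine Submodule.topologicalClosure_minimal _ ?_ (hclosed a)
      refine iSup₂_le fun b hb => ?_
      intro x hx
      have hxb : x ∈ extFam H (b : WithTop A) := (mem_interactionSub.mp hx).1
      exact hmono hb hxb
    · intro x hx
      have hmem : x ∈ (⨆ b ∈ {b : A | b ≤ a}, interactionSub H (b : WithTop A)) := ?_
      · exact Submodule.le_topologicalClosure _ hmem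
      have hpa : projC (extFam H (a : WithTop A)) x = x :=
        projC_eq_self' (hclosed' _) (by rw [extFam_coe]; exact hx)
      rw [hproj] at hpa
      rw [← hpa, ContinuousLinearMap.sum_apply]
      refine Submodule.sum_mem _ fun b hb => ?_
      have hb' : b ≤ (a : WithTop A) := by simpa using hb
      obtain ⟨c, rfl⟩ : ∃ c : A, (c : WithTop A) = b := by
        cases b with
        | top => exact absurd hb' (by simp [WithTop.not_top_le_coe])
        | coe c => exact ⟨c, rfl⟩
      have hc : c ≤ a := WithTop.coe_le_coe.mp hb'
      exact le_iSup₂ (f := fun (b : A) (_ : b ∈ {b : A | b ≤ a}) =>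
        interactionSub H (b : WithTop A)) c hc (hrangeMem _ x)
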